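/- Let s, l be positive integers and let A, B ∈ M_{s×l}(ℤ) be matrices all of whose rows sum to 0, both in homogeneous Smith normal form. If there exist Q ∈ GL_s(ℤ) and P ∈ GL_l(ℤ) with P·𝟙 = 𝟙 such that B = Q·A·P⁻¹, then A = B. (Uniqueness of the homogeneous Smith normal form in each orbit of GL_s(ℤ)×GL_l^h(ℤ).) -/

import Mathlib

open Matrix

/-- A matrix `A ∈ M_{s×l}(ℤ)` is in Smith normal form: it is diagonal, and there is `r`
such that the first `r` diagonal entries are positive, the remaining ones vanish, and
consecutive diagonal entries divide each other. -/
def IsSNF {s l : ℕ} (A : Matrix (Fin s) (Fin l) ℤ) : Prop :=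
  (∀ (i : Fin s) (j : Fin l), (i : ℕ) ≠ (j : ℕ) → A i j = 0) ∧
  ∃ r : ℕ,
    (∀ (i : Fin s) (j : Fin l), (i : ℕ) = (j : ℕ) →
      ((i : ℕ) < r → 0 < A i j) ∧ (r ≤ (i : ℕ) → A i j = 0)) ∧
    (∀ (i i' : Fin s) (j j' : Fin l), (i : ℕ) = (j : ℕ) → (i' : ℕ) = (j' : ℕ) →
      (i : ℕ) + 1 = (i' : ℕ) → A i j ∣ A i' j')

/-- The matrix obtained from `A` by erasing its first column. -/
def eraseFirstCol {s l : ℕ} (A : Matrix (Fin s) (Fin l) ℤ) :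
    Matrix (Fin s) (Fin (l - 1)) ℤ :=
  Matrix.of fun i j => A i ⟨(j : ℕ) + 1, by have := j.isLt; omega⟩

/-- A matrix `A` with `A·𝟙 = 0` is in homogeneous Smith normal form if the matrix obtained
from `A` by erasing its first column is in Smith normal form. -/
def IsHSNF {s l : ℕ} (A : Matrix (Fin s) (Fin l) ℤ) : Prop :=
  A *ᵥ 1 = 0 ∧ IsSNF (eraseFirstCol A)


section HSNFAux
open Finset Submodule

/-- pointwise equality from product equality when `f ≤ g` pointwise and `g` positive. -/
lemma prod_eq_forall {k : ℕ} (f g : Fin k → ℕ) (hle : ∀ i, f i ≤ g i)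
    (hpos : ∀ i, 0 < f i) (hprod : ∏ i, f i = ∏ i, g i) : ∀ i, f i = g i := by
  intro i
  by_contra hne
  have hlt : f i < g i := lt_of_le_of_ne (hle i) hne
  have : ∏ j, f j < ∏ j, g j :=
    Finset.prod_lt_prod (fun j _ => hpos j) (fun j _ => hle j) ⟨i, Finset.mem_univ i, hlt⟩
  omega

lemma hsnf_arith : ∀ (s : ℕ) (a b : Fin s → ℕ),
    (∀ i j : Fin s, i ≤ j → a i ∣ a j) → (∀ i j : Fin s, i ≤ j → b i ∣ b j) →
    (∀ n : ℕ, 0 < n → ∏ i, Nat.gcd n (a i) = ∏ i, Nat.gcd n (b i)) → a = b := by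
  intro s
  induction s with
  | zero => intro a b _ _ _; funext i; exact i.elim0
  | succ s IH =>
    intro a b ha hb hf
    -- helper facts
    have key : ∀ (c d : Fin (s+1) → ℕ), (∀ i j : Fin (s+1), i ≤ j → c i ∣ c j) →
        (∀ i j : Fin (s+1), i ≤ j → d i ∣ d j) →
        (∀ n : ℕ, 0 < n → ∏ i, Nat.gcd n (c i) = ∏ i, Nat.gcd n (d i)) →
        c (Fin.last s) = 0 → d (Fin.last s) = 0 := by
      intro c d hc hd hcd hc0
      by_contra hd0
      have hdpos : ∀ i, 0 < d i := by
        intro i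
        rcases Nat.eq_zero_or_pos (d i) with h | h
        · exact absurd (Nat.eq_zero_of_zero_dvd (h ▸ hd i (Fin.last s) (Fin.le_last i))) hd0
        · exact h
      set D := ∏ i, d i with hD
      have hDpos : 0 < D := Finset.prod_pos fun i _ => hdpos i
      have h1 : ∏ i, Nat.gcd (D+1) (d i) ≤ D :=
        Finset.prod_le_prod (fun i _ => Nat.zero_le _)
          (fun i _ => Nat.gcd_le_right _ (hdpos i))
      have h2 : D + 1 ≤ ∏ i, Nat.gcd (D+1) (c i) := by
        have h0 : Nat.gcd (D+1) (c (Fin.last s)) = D + 1 := by rw [hc0, Nat.gcd_zero_right]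
        have h1 : Nat.gcd (D+1) (c (Fin.last s)) ≤ ∏ i, Nat.gcd (D+1) (c i) :=
          Finset.single_le_prod' (f := fun i => Nat.gcd (D+1) (c i))
            (fun i _ => Nat.gcd_pos_of_pos_left _ (Nat.succ_pos D))
            (Finset.mem_univ (Fin.last s))
        omega
      have := hcd (D+1) (Nat.succ_pos D)
      omega
    rcases Nat.eq_zero_or_pos (a (Fin.last s)) with haz | hapos
    · -- both last entries zero
      have hbz : b (Fin.last s) = 0 := key a b ha hb hf haz
      have hf' : ∀ n : ℕ, 0 < n →
          ∏ i : Fin s, Nat.gcd n (a i.castSucc) = ∏ i : Fin s, Nat.gcd n (b i.castSucc) := by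
        intro n hn
        have h := hf n hn
        rw [Fin.prod_univ_castSucc, Fin.prod_univ_castSucc, haz, hbz,
          Nat.gcd_zero_right] at h
        exact Nat.eq_of_mul_eq_mul_right hn h
      have := IH (fun i => a i.castSucc) (fun i => b i.castSucc)
        (fun i j hij => ha _ _ (by simpa using hij)) (fun i j hij => hb _ _ (by simpa using hij)) hf'
      funext i
      rcases Fin.eq_castSucc_or_eq_last i with ⟨j, rfl⟩ | rfl
      · exact congrFun this j
      · rw [haz, hbz]
    · -- both last entries positive
      have hbpos' : b (Fin.last s) ≠ 0 := by
        intro hbz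
        have := key b a hb ha (fun n hn => (hf n hn).symm) hbz
        omega
      have hbpos : 0 < b (Fin.last s) := Nat.pos_of_ne_zero hbpos'
      have hallb : ∀ i, 0 < b i := fun i => Nat.pos_of_ne_zero fun h =>
        hbpos' (Nat.eq_zero_of_zero_dvd (h ▸ hb i (Fin.last s) (Fin.le_last i)))
      have halla : ∀ i, 0 < a i := fun i => Nat.pos_of_ne_zero fun h => by
        have := Nat.eq_zero_of_zero_dvd (h ▸ ha i (Fin.last s) (Fin.le_last i)); omega
      have hgcda : ∀ i, Nat.gcd (a (Fin.last s)) (a i) = a i :=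
        fun i => Nat.gcd_eq_right (ha i (Fin.last s) (Fin.le_last i))
      have hgcdb : ∀ i, Nat.gcd (b (Fin.last s)) (b i) = b i :=
        fun i => Nat.gcd_eq_right (hb i (Fin.last s) (Fin.le_last i))
      have hPa : ∏ i, Nat.gcd (a (Fin.last s)) (a i) = ∏ i, a i :=
        Finset.prod_congr rfl fun i _ => hgcda i
      have hPb : ∏ i, Nat.gcd (b (Fin.last s)) (b i) = ∏ i, b i :=
        Finset.prod_congr rfl fun i _ => hgcdb i
      have hle1 : ∀ n, 0 < n → ∏ i, Nat.gcd n (b i) ≤ ∏ i, b i :=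
        fun n _ => Finset.prod_le_prod (fun i _ => Nat.zero_le _)
          (fun i _ => Nat.gcd_le_right _ (hallb i))
      have hle2 : ∀ n, 0 < n → ∏ i, Nat.gcd n (a i) ≤ ∏ i, a i :=
        fun n _ => Finset.prod_le_prod (fun i _ => Nat.zero_le _)
          (fun i _ => Nat.gcd_le_right _ (halla i))
      have hPab : ∏ i, a i = ∏ i, b i := by
        have h1 : ∏ i, a i ≤ ∏ i, b i := by
          rw [← hPa, hf _ hapos]; exact hle1 _ hapos
        have h2 : ∏ i, b i ≤ ∏ i, a i := by
          rw [← hPb, ← hf _ hbpos]; exact hle2 _ hbpos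
        omega
      -- each b i divides a last
      have hba : ∀ i, b i ∣ a (Fin.last s) := by
        have heq : ∏ i, Nat.gcd (a (Fin.last s)) (b i) = ∏ i, b i := by
          rw [← hf _ hapos, hPa, hPab]
        have := prod_eq_forall _ _ (fun i => Nat.gcd_le_right _ (hallb i))
          (fun i => Nat.gcd_pos_of_pos_left _ hapos) heq
        exact fun i => (this i) ▸ Nat.gcd_dvd_left _ _
      have hab : ∀ i, a i ∣ b (Fin.last s) := by
        have heq : ∏ i, Nat.gcd (b (Fin.last s)) (a i) = ∏ i, a i := by
          rw [hf _ hbpos, hPb, ← hPab]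
        have := prod_eq_forall _ _ (fun i => Nat.gcd_le_right _ (halla i))
          (fun i => Nat.gcd_pos_of_pos_left _ hbpos) heq
        exact fun i => (this i) ▸ Nat.gcd_dvd_left _ _
      have hlast : a (Fin.last s) = b (Fin.last s) :=
        Nat.dvd_antisymm (hab _) (hba _)
      -- cancel the last factor
      have hf' : ∀ n : ℕ, 0 < n →
          ∏ i : Fin s, Nat.gcd n (a i.castSucc) = ∏ i : Fin s, Nat.gcd n (b i.castSucc) := by
        intro n hn
        have h := hf n hn
        rw [Fin.prod_univ_castSucc, Fin.prod_univ_castSucc, hlast] at h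
        exact Nat.eq_of_mul_eq_mul_right (Nat.gcd_pos_of_pos_left _ hn) h
      have := IH (fun i => a i.castSucc) (fun i => b i.castSucc)
        (fun i j hij => ha _ _ (by simpa using hij)) (fun i j hij => hb _ _ (by simpa using hij)) hf'
      funext i
      rcases Fin.eq_castSucc_or_eq_last i with ⟨j, rfl⟩ | rfl
      · exact congrFun this j
      · exact hlast

lemma hsnf_pi_sup {s : ℕ} (p q : Fin s → Submodule ℤ ℤ) :
    Submodule.pi Set.univ p ⊔ Submodule.pi Set.univ q
      = Submodule.pi Set.univ (fun i => p i ⊔ q i) := by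
  apply le_antisymm
  · apply sup_le
    · intro v hv i hi
      exact le_sup_left (α := Submodule ℤ ℤ) (hv i hi)
    · intro v hv i hi
      exact le_sup_right (α := Submodule ℤ ℤ) (hv i hi)
  · intro v hv
    have h := fun i => Submodule.mem_sup.mp (hv i (Set.mem_univ i))
    choose x hx y hy hxy using h
    have hv' : v = x + y := funext fun i => (hxy i).symm
    rw [hv']
    exact Submodule.add_mem_sup (fun i _ => hx i) (fun i _ => hy i)

lemma hsnf_span_sup (d : ℤ) (n : ℕ) :
    Ideal.span {d} ⊔ Ideal.span {(n : ℤ)} = Ideal.span {(Nat.gcd n d.natAbs : ℤ)} := by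
  have hg : (Nat.gcd n d.natAbs : ℤ) = Int.gcd (n : ℤ) d := by
    rw [Int.gcd]; norm_num
  rw [hg]
  apply le_antisymm
  · apply sup_le <;> rw [Ideal.span_singleton_le_span_singleton]
    · exact Int.gcd_dvd_right _ _
    · exact Int.gcd_dvd_left _ _
  · rw [Ideal.span_le, Set.singleton_subset_iff]
    rw [Int.gcd_eq_gcd_ab (n : ℤ) d]
    refine Submodule.add_mem _ (Submodule.mem_sup_right ?_) (Submodule.mem_sup_left ?_)
    · exact Ideal.mem_span_singleton.mpr ⟨_, rfl⟩
    · exact Ideal.mem_span_singleton.mpr ⟨_, rfl⟩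

lemma hsnf_smul_range {s : ℕ} (n : ℕ) :
    (Submodule.pi Set.univ (fun _ : Fin s => Ideal.span {(n : ℤ)}))
      = LinearMap.range ((n : ℤ) • (LinearMap.id : (Fin s → ℤ) →ₗ[ℤ] (Fin s → ℤ))) := by
  ext v
  simp only [Submodule.mem_pi, Set.mem_univ, forall_true_left, Ideal.mem_span_singleton,
    LinearMap.mem_range, LinearMap.smul_apply, LinearMap.id_apply]
  constructor
  · intro h
    choose c hc using h
    exact ⟨c, funext fun i => by simp [hc i, mul_comm]⟩
  · rintro ⟨y, rfl⟩ i
    exact ⟨y i, by simp [mul_comm]⟩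

lemma hsnf_card (s : ℕ) (c : Fin s → ℕ) :
    Nat.card ((Fin s → ℤ) ⧸ Submodule.pi Set.univ (fun i => Ideal.span {(c i : ℤ)}))
      = ∏ i, c i := by
  rw [Nat.card_congr (Submodule.quotientPi _).toEquiv, Nat.card_pi]
  exact Finset.prod_congr rfl fun i _ => by
    rw [Nat.card_congr (Int.quotientSpanNatEquivZMod (c i)).toEquiv, Nat.card_zmod]

lemma hsnf_invariant {s : ℕ} (dA dB : Fin s → ℤ)
    (Qe : (Fin s → ℤ) ≃ₗ[ℤ] (Fin s → ℤ))
    (hmap : Submodule.map (Qe : (Fin s → ℤ) →ₗ[ℤ] (Fin s → ℤ))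
        (Submodule.pi Set.univ fun i => Ideal.span {dA i})
      = Submodule.pi Set.univ fun i => Ideal.span {dB i}) :
    ∀ n : ℕ, 0 < n →
      ∏ i, Nat.gcd n (dA i).natAbs = ∏ i, Nat.gcd n (dB i).natAbs := by
  intro n hn
  set Nn : Submodule ℤ (Fin s → ℤ) :=
    Submodule.pi Set.univ (fun _ : Fin s => Ideal.span {(n : ℤ)}) with hNn
  have hNmap : Submodule.map (Qe : (Fin s → ℤ) →ₗ[ℤ] (Fin s → ℤ)) Nn = Nn := by
    rw [hNn, hsnf_smul_range, ← LinearMap.range_comp]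
    have hcomm : (Qe : (Fin s → ℤ) →ₗ[ℤ] (Fin s → ℤ)) ∘ₗ
        ((n : ℤ) • (LinearMap.id : (Fin s → ℤ) →ₗ[ℤ] (Fin s → ℤ)))
        = ((n : ℤ) • (LinearMap.id : (Fin s → ℤ) →ₗ[ℤ] (Fin s → ℤ))) ∘ₗ
          (Qe : (Fin s → ℤ) →ₗ[ℤ] (Fin s → ℤ)) := by
      refine LinearMap.ext fun v => ?_
      simp only [LinearMap.comp_apply, LinearMap.smul_apply, LinearMap.id_apply,
        LinearMap.coe_coe]
      exact map_smul Qe (n : ℤ) v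
    rw [hcomm, LinearMap.range_comp, LinearEquiv.range, Submodule.map_top]
  have hsup : Submodule.map (Qe : (Fin s → ℤ) →ₗ[ℤ] (Fin s → ℤ))
      ((Submodule.pi Set.univ fun i => Ideal.span {dA i}) ⊔ Nn)
      = (Submodule.pi Set.univ fun i => Ideal.span {dB i}) ⊔ Nn := by
    rw [Submodule.map_sup, hmap, hNmap]
  rw [hNn, hsnf_pi_sup, hsnf_pi_sup] at hsup
  simp only [hsnf_span_sup] at hsup
  have e := Submodule.Quotient.equiv _ _ Qe hsup
  have hcard := Nat.card_congr e.toEquiv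
  rwa [hsnf_card, hsnf_card] at hcard

/-- Removing the first column does not change the column span, when rows sum to zero. -/
lemma hsnf_range_erase {s m : ℕ} (A : Matrix (Fin s) (Fin (m+1)) ℤ)
    (hsum : ∀ i, ∑ j, A i j = 0) :
    LinearMap.range (Matrix.mulVecLin A)
      = LinearMap.range (Matrix.mulVecLin (Matrix.of fun i (j : Fin m) => A i j.succ)) := by
  apply le_antisymm
  · rintro _ ⟨x, rfl⟩
    refine ⟨fun j => x j.succ - x 0, ?_⟩
    funext i
    have hs := hsum i
    rw [Fin.sum_univ_succ] at hs
    simp only [Matrix.mulVecLin_apply, Matrix.mulVec, dotProduct, Matrix.of_apply]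
    rw [Fin.sum_univ_succ (f := fun j => A i j * x j)]
    have : ∀ j : Fin m, A i j.succ * (x j.succ - x 0)
        = A i j.succ * x j.succ - A i j.succ * x 0 := fun j => by ring
    rw [Finset.sum_congr rfl (fun j _ => this j), Finset.sum_sub_distrib,
      ← Finset.sum_mul]
    have h0 : ∑ j : Fin m, A i j.succ = - A i 0 := by linarith
    rw [h0]; ring
  · rintro _ ⟨y, rfl⟩
    refine ⟨Fin.cons 0 y, ?_⟩
    funext i
    simp only [Matrix.mulVecLin_apply, Matrix.mulVec, dotProduct, Matrix.of_apply]
    simp [Fin.sum_univ_succ]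

/-- The column span of a "diagonal" rectangular matrix is a product of principal ideals. -/
lemma hsnf_range_diag {s m : ℕ} (A' : Matrix (Fin s) (Fin m) ℤ)
    (hdiag : ∀ (i : Fin s) (j : Fin m), (i : ℕ) ≠ (j : ℕ) → A' i j = 0) :
    LinearMap.range (Matrix.mulVecLin A')
      = Submodule.pi Set.univ (fun i : Fin s =>
          Ideal.span {if h : (i : ℕ) < m then A' i ⟨i, h⟩ else 0}) := by
  have hcompute : ∀ (y : Fin m → ℤ) (i : Fin s),
      (A' *ᵥ y) i = if h : (i : ℕ) < m then A' i ⟨i, h⟩ * y ⟨i, h⟩ else 0 := by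
    intro y i
    rw [Matrix.mulVec, dotProduct]
    split_ifs with h
    · refine Finset.sum_eq_single (⟨(i : ℕ), h⟩ : Fin m) (fun j _ hj => ?_)
        (fun hni => absurd (Finset.mem_univ _) hni)
      rw [hdiag i j (fun hc => hj (Fin.ext hc.symm)), zero_mul]
    · refine Finset.sum_eq_zero fun j _ => ?_
      rw [hdiag i j (fun hc => h (hc ▸ j.isLt)), zero_mul]
  apply le_antisymm
  · rintro _ ⟨y, rfl⟩
    refine Submodule.mem_pi.mpr fun i _ => ?_
    rw [Ideal.mem_span_singleton, Matrix.mulVecLin_apply, hcompute y i]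
    split_ifs with h
    · exact Dvd.intro _ rfl
    · exact dvd_zero 0
  · intro v hv
    have h := fun i => Ideal.mem_span_singleton.mp (hv i (Set.mem_univ i))
    choose c hc using h
    refine ⟨fun j => if h : (j : ℕ) < s then c ⟨j, h⟩ else 0, ?_⟩
    funext i
    rw [Matrix.mulVecLin_apply, hcompute]
    by_cases h : (i : ℕ) < m
    · rw [dif_pos h]
      have hy : (if h' : (i : ℕ) < s then c ⟨(i : ℕ), h'⟩ else 0) = c i := by
        rw [dif_pos i.isLt]
      show A' i ⟨(i : ℕ), h⟩ * (if h' : (i : ℕ) < s then c ⟨(i : ℕ), h'⟩ else 0) = v i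
      rw [hy]
      have := hc i
      rw [dif_pos h] at this
      exact this.symm
    · rw [dif_neg h]
      have := hc i
      rw [dif_neg h, zero_mul] at this
      exact this.symm
/-- From a consecutive divisibility chain to a monotone one. -/
lemma hsnf_chain_dvd {s : ℕ} (d : Fin s → ℕ)
    (hd : ∀ (k : ℕ) (hk : k + 1 < s), d ⟨k, by omega⟩ ∣ d ⟨k+1, hk⟩) :
    ∀ i j : Fin s, i ≤ j → d i ∣ d j := by
  have key : ∀ (t i j : ℕ) (hi : i < s) (hj : j < s), i + t = j → d ⟨i, hi⟩ ∣ d ⟨j, hj⟩ := by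
    intro t
    induction t with
    | zero =>
      intro i j hi hj hij
      obtain rfl : i = j := by omega
      exact dvd_refl _
    | succ t IH =>
      intro i j hi hj hij
      have hj' : i + t < s := by omega
      refine (IH i (i + t) hi hj' rfl).trans ?_
      obtain rfl : (i + t) + 1 = j := by omega
      exact hd (i + t) hj
  rintro ⟨i, hi⟩ ⟨j, hj⟩ hij
  exact key (j - i) i j hi hj (by have : i ≤ j := hij; omega)

end HSNFAux

/-- Uniqueness of the homogeneous Smith normal form in each orbit of the action of
`GL_s(ℤ) × GL_l^h(ℤ)` on matrices all of whose rows sum to zero. -/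
theorem hsnf_unique (s l : ℕ) (hs : 0 < s) (hl : 0 < l)
    (A B : Matrix (Fin s) (Fin l) ℤ) (hA1 : A *ᵥ 1 = 0) (hB1 : B *ᵥ 1 = 0)
    (hA : IsHSNF A) (hB : IsHSNF B)
    (h : ∃ (Q : Matrix.GeneralLinearGroup (Fin s) ℤ)
          (P : Matrix.GeneralLinearGroup (Fin l) ℤ),
        (P : Matrix (Fin l) (Fin l) ℤ) *ᵥ 1 = 1 ∧
        B = (Q : Matrix (Fin s) (Fin s) ℤ) * A *
          ((P⁻¹ : Matrix.GeneralLinearGroup (Fin l) ℤ) : Matrix (Fin l) (Fin l) ℤ)) :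
    A = B := by
  obtain ⟨Q, P, hP1, hQP⟩ := h
  obtain ⟨m, rfl⟩ : ∃ m, l = m + 1 := ⟨l - 1, (Nat.succ_pred_eq_of_pos hl).symm⟩
  have hsumA : ∀ i, ∑ j, A i j = 0 := by
    intro i
    have := congrFun hA1 i
    simpa [Matrix.mulVec, dotProduct] using this
  have hsumB : ∀ i, ∑ j, B i j = 0 := by
    intro i
    have := congrFun hB1 i
    simpa [Matrix.mulVec, dotProduct] using this
  -- the erased matrices
  have hAsnf : IsSNF (Matrix.of fun i (j : Fin m) => A i j.succ) := hA.2
  have hBsnf : IsSNF (Matrix.of fun i (j : Fin m) => B i j.succ) := hB.2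
  obtain ⟨hdiagA, rA, hposA, hchainA⟩ := hAsnf
  obtain ⟨hdiagB, rB, hposB, hchainB⟩ := hBsnf
  set A' : Matrix (Fin s) (Fin m) ℤ := Matrix.of fun i (j : Fin m) => A i j.succ with hA'
  set B' : Matrix (Fin s) (Fin m) ℤ := Matrix.of fun i (j : Fin m) => B i j.succ with hB'
  set dA : Fin s → ℤ := fun i => if h : (i : ℕ) < m then A' i ⟨i, h⟩ else 0 with hdA
  set dB : Fin s → ℤ := fun i => if h : (i : ℕ) < m then B' i ⟨i, h⟩ else 0 with hdB
  -- nonnegativity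
  have hdAnn : ∀ i, 0 ≤ dA i := by
    intro i
    rw [hdA]
    dsimp only
    split_ifs with h
    · obtain ⟨hp, hz⟩ := hposA i ⟨(i : ℕ), h⟩ rfl
      rcases lt_or_ge (i : ℕ) rA with h' | h'
      · exact le_of_lt (hp h')
      · exact le_of_eq (hz h').symm
    · exact le_refl 0
  have hdBnn : ∀ i, 0 ≤ dB i := by
    intro i
    rw [hdB]
    dsimp only
    split_ifs with h
    · obtain ⟨hp, hz⟩ := hposB i ⟨(i : ℕ), h⟩ rfl
      rcases lt_or_ge (i : ℕ) rB with h' | h'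
      · exact le_of_lt (hp h')
      · exact le_of_eq (hz h').symm
    · exact le_refl 0
  -- consecutive chains
  have hchainA' : ∀ (k : ℕ) (hk : k + 1 < s),
      (dA ⟨k, by omega⟩).natAbs ∣ (dA ⟨k+1, hk⟩).natAbs := by
    intro k hk
    rw [Int.natAbs_dvd_natAbs, hdA]
    dsimp only
    by_cases h1 : k + 1 < m
    · rw [dif_pos h1, dif_pos (by omega : k < m)]
      exact hchainA ⟨k, by omega⟩ ⟨k+1, hk⟩ ⟨k, by omega⟩ ⟨k+1, h1⟩ rfl rfl rfl
    · rw [dif_neg h1]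
      exact dvd_zero _
  have hchainB' : ∀ (k : ℕ) (hk : k + 1 < s),
      (dB ⟨k, by omega⟩).natAbs ∣ (dB ⟨k+1, hk⟩).natAbs := by
    intro k hk
    rw [Int.natAbs_dvd_natAbs, hdB]
    dsimp only
    by_cases h1 : k + 1 < m
    · rw [dif_pos h1, dif_pos (by omega : k < m)]
      exact hchainB ⟨k, by omega⟩ ⟨k+1, hk⟩ ⟨k, by omega⟩ ⟨k+1, h1⟩ rfl rfl rfl
    · rw [dif_neg h1]
      exact dvd_zero _
  -- the linear equivalence from Q
  have hQ1 : Matrix.mulVecLin ((Q : Matrix (Fin s) (Fin s) ℤ)) ∘ₗ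
      Matrix.mulVecLin (((Q⁻¹ : Matrix.GeneralLinearGroup (Fin s) ℤ) : Matrix (Fin s) (Fin s) ℤ))
      = LinearMap.id := by
    rw [← Matrix.mulVecLin_mul, Q.mul_inv, Matrix.mulVecLin_one]
  have hQ2 : Matrix.mulVecLin (((Q⁻¹ : Matrix.GeneralLinearGroup (Fin s) ℤ) : Matrix (Fin s) (Fin s) ℤ)) ∘ₗ
      Matrix.mulVecLin ((Q : Matrix (Fin s) (Fin s) ℤ))
      = LinearMap.id := by
    rw [← Matrix.mulVecLin_mul, Q.inv_mul, Matrix.mulVecLin_one]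
  set Qe : (Fin s → ℤ) ≃ₗ[ℤ] (Fin s → ℤ) :=
    LinearEquiv.ofLinear (Matrix.mulVecLin ((Q : Matrix (Fin s) (Fin s) ℤ)))
      (Matrix.mulVecLin (((Q⁻¹ : Matrix.GeneralLinearGroup (Fin s) ℤ) : Matrix (Fin s) (Fin s) ℤ)))
      hQ1 hQ2 with hQe
  -- range computations
  have hLA : LinearMap.range (Matrix.mulVecLin A)
      = Submodule.pi Set.univ (fun i => Ideal.span {dA i}) :=
    (hsnf_range_erase A hsumA).trans (hsnf_range_diag A' hdiagA)
  have hLB : LinearMap.range (Matrix.mulVecLin B)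
      = Submodule.pi Set.univ (fun i => Ideal.span {dB i}) :=
    (hsnf_range_erase B hsumB).trans (hsnf_range_diag B' hdiagB)
  have hrangeB : LinearMap.range (Matrix.mulVecLin B)
      = Submodule.map (Qe : (Fin s → ℤ) →ₗ[ℤ] (Fin s → ℤ))
          (LinearMap.range (Matrix.mulVecLin A)) := by
    rw [hQP, Matrix.mulVecLin_mul, Matrix.mulVecLin_mul, LinearMap.range_comp]
    have hPt : LinearMap.range (Matrix.mulVecLin
        (((P⁻¹ : Matrix.GeneralLinearGroup (Fin (m+1)) ℤ) : Matrix (Fin (m+1)) (Fin (m+1)) ℤ)))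
        = ⊤ := by
      rw [LinearMap.range_eq_top]
      intro v
      refine ⟨(P : Matrix (Fin (m+1)) (Fin (m+1)) ℤ) *ᵥ v, ?_⟩
      rw [Matrix.mulVecLin_apply, Matrix.mulVec_mulVec, P.inv_mul, Matrix.one_mulVec]
    rw [hPt, Submodule.map_top, LinearMap.range_comp]
    rfl
  have hmap : Submodule.map (Qe : (Fin s → ℤ) →ₗ[ℤ] (Fin s → ℤ))
      (Submodule.pi Set.univ fun i => Ideal.span {dA i})
      = Submodule.pi Set.univ fun i => Ideal.span {dB i} := by
    rw [← hLA, ← hrangeB, hLB]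
  have hgcd := hsnf_invariant dA dB Qe hmap
  have habs : (fun i => (dA i).natAbs) = (fun i => (dB i).natAbs) := by
    refine hsnf_arith s _ _ (hsnf_chain_dvd _ hchainA') (hsnf_chain_dvd _ hchainB') hgcd
  have hd : dA = dB := by
    funext i
    have h1 := congrFun habs i
    rw [← Int.natAbs_of_nonneg (hdAnn i), ← Int.natAbs_of_nonneg (hdBnn i), h1]
  -- reconstruct
  have hAB' : ∀ (i : Fin s) (j : Fin m), A' i j = B' i j := by
    intro i j
    by_cases hij : (i : ℕ) = (j : ℕ)
    · have hjm : (i : ℕ) < m := hij ▸ j.isLt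
      have hji : j = ⟨(i : ℕ), hjm⟩ := Fin.ext hij.symm
      have e1 : A' i j = dA i := by rw [hdA]; dsimp only; rw [dif_pos hjm, hji]
      have e2 : B' i j = dB i := by rw [hdB]; dsimp only; rw [dif_pos hjm, hji]
      rw [e1, e2, hd]
    · rw [hdiagA i j hij, hdiagB i j hij]
  funext i j
  refine Fin.cases ?_ ?_ j
  · have h1 := hsumA i
    have h2 := hsumB i
    rw [Fin.sum_univ_succ] at h1 h2
    have h3 : ∑ j : Fin m, A i j.succ = ∑ j : Fin m, B i j.succ :=
      Finset.sum_congr rfl fun j _ => hAB' i j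
    omega
  · intro j
    exact hAB' i j
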